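/- Suppose D_iᵀAD_i is invertible and rank D_i = p for all 0 ≤ i ≤ k in the cCG iteration. Then the residue matrix R_{k+1} is orthogonal to every earlier direction matrix: D_iᵀR_{k+1} = 0 for all 0 ≤ i ≤ k. -/

import Mathlib

open Matrix


lemma cCG_aux_inj {n p : ℕ} (M : Matrix (Fin n) (Fin p) ℝ) (h : M.rank = p) :
    Function.Injective M.mulVec := by
  have hrn := LinearMap.finrank_range_add_finrank_ker M.mulVecLin
  rw [show Module.finrank ℝ (Fin p → ℝ) = p by simp] at hrn
  have hker : Module.finrank ℝ (LinearMap.ker M.mulVecLin) = 0 := by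
    have : M.rank = Module.finrank ℝ (LinearMap.range M.mulVecLin) := rfl
    omega
  have : LinearMap.ker M.mulVecLin = ⊥ := Submodule.finrank_eq_zero.mp hker
  have hinj : Function.Injective M.mulVecLin := LinearMap.ker_eq_bot.mp this
  exact hinj

lemma cCG_aux_posdef {n p : ℕ} (M : Matrix (Fin n) (Fin p) ℝ)
    (h : Function.Injective M.mulVec) : (Mᵀ * M).PosDef := by
  rw [posDef_iff_dotProduct_mulVec]
  constructor
  · rw [← conjTranspose_eq_transpose_of_trivial]
    exact isHermitian_conjTranspose_mul_self M
  · intro x hx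
    have hMx : M *ᵥ x ≠ 0 := by
      intro hc
      exact hx (h (by simpa using hc))
    have : star x ⬝ᵥ (Mᵀ * M) *ᵥ x = (M *ᵥ x) ⬝ᵥ (M *ᵥ x) := by
      rw [star_trivial, ← mulVec_mulVec, dotProduct_mulVec, vecMul_transpose]
    rw [this]
    have := dotProduct_self_star_pos_iff (v := M *ᵥ x) |>.mpr hMx
    simpa using this

/-- If `D_iᵀAD_i` is invertible and `rank D_i = p` for all `0 ≤ i ≤ k`
in the cCG iteration, then the residue matrix `R_{k+1}` is orthogonal to every earlier
direction matrix: `D_iᵀR_{k+1} = 0` for all `0 ≤ i ≤ k`. -/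
theorem cCG_residue_orthogonal_to_directions
    (n p : ℕ) (hn : 0 < n) (hp : 0 < p) (hpn : p ≤ n)
    (A : Matrix (Fin n) (Fin n) ℝ) (hA : A.PosDef)
    (b : Fin n → ℝ) (k : ℕ)
    (X R D : ℕ → Matrix (Fin n) (Fin p) ℝ)
    (α β : ℕ → Matrix (Fin p) (Fin p) ℝ)
    (hR : ∀ i, R i = A * X i - Matrix.vecMulVec b 1)
    (hD0 : D 0 = R 0)
    (hinv : ∀ i ≤ k, IsUnit ((D i)ᵀ * A * D i).det)
    (hrank : ∀ i ≤ k, (D i).rank = p)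
    (hα : ∀ i ≤ k, α i = -((R i)ᵀ * D i * ((D i)ᵀ * A * D i)⁻¹))
    (hX : ∀ i ≤ k, X (i + 1) = X i + D i * (α i)ᵀ)
    (hβ : ∀ i ≤ k, β i = -((R (i + 1))ᵀ * A * D i * ((D i)ᵀ * A * D i)⁻¹))
    (hDs : ∀ i ≤ k, D (i + 1) = R (i + 1) + D i * (β i)ᵀ)
    :
    ∀ i ≤ k, (D i)ᵀ * R (k + 1) = 0 := by
  have hAs : Aᵀ = A := by
    have h := hA.isHermitian
    rwa [Matrix.IsHermitian, conjTranspose_eq_transpose_of_trivial] at h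
  have hSsymm : ∀ i : ℕ, ((D i)ᵀ * A * D i)ᵀ = (D i)ᵀ * A * D i := by
    intro i
    simp [Matrix.transpose_mul, hAs, Matrix.mul_assoc]
  have hSmul : ∀ i ≤ k, ((D i)ᵀ * A * D i) * ((D i)ᵀ * A * D i)⁻¹ = 1 := fun i hi =>
    Matrix.mul_nonsing_inv _ (hinv i hi)
  have hSinvT : ∀ i : ℕ, (((D i)ᵀ * A * D i)⁻¹)ᵀ = ((D i)ᵀ * A * D i)⁻¹ := by
    intro i
    rw [Matrix.transpose_nonsing_inv, hSsymm]
  have hdp : ∀ {q r : ℕ} (M : Matrix (Fin q) (Fin r) ℝ) (u : Fin r → ℝ) (z : Fin q → ℝ),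
      (M *ᵥ u) ⬝ᵥ z = u ⬝ᵥ (Mᵀ *ᵥ z) := by
    intro q r M u z
    rw [dotProduct_mulVec, vecMul_transpose]
  -- Fact 1 : residual recurrence
  have hRrec : ∀ i ≤ k, R (i + 1) = R i + A * D i * (α i)ᵀ := by
    intro i hi
    rw [hR (i + 1), hR i, hX i hi, Matrix.mul_add, ← Matrix.mul_assoc]
    abel
  -- Fact 2 : consecutive orthogonality
  have horth1 : ∀ i ≤ k, (D i)ᵀ * R (i + 1) = 0 := by
    intro i hi
    have hαT : (α i)ᵀ = -(((D i)ᵀ * A * D i)⁻¹ * ((D i)ᵀ * R i)) := by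
      rw [hα i hi, Matrix.transpose_neg, Matrix.transpose_mul, hSinvT,
        Matrix.transpose_mul, Matrix.transpose_transpose]
    rw [hRrec i hi, Matrix.mul_add, hαT]
    have : (D i)ᵀ * (A * D i * -(((D i)ᵀ * A * D i)⁻¹ * ((D i)ᵀ * R i)))
        = -((((D i)ᵀ * A * D i) * ((D i)ᵀ * A * D i)⁻¹) * ((D i)ᵀ * R i)) := by
      simp [Matrix.mul_assoc]
    rw [this, hSmul i hi, Matrix.one_mul]
    abel
  -- Fact 3 : consecutive conjugacy
  have hconj1 : ∀ i ≤ k, (D i)ᵀ * A * D (i + 1) = 0 := by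
    intro i hi
    have hβT : (β i)ᵀ = -(((D i)ᵀ * A * D i)⁻¹ * ((D i)ᵀ * A * R (i + 1))) := by
      rw [hβ i hi, Matrix.transpose_neg, Matrix.transpose_mul, hSinvT,
        Matrix.transpose_mul, Matrix.transpose_mul, Matrix.transpose_transpose, hAs]
      simp [Matrix.mul_assoc]
    rw [hDs i hi, Matrix.mul_add, hβT]
    have : (D i)ᵀ * A * (D i * -(((D i)ᵀ * A * D i)⁻¹ * ((D i)ᵀ * A * R (i + 1))))
        = -((((D i)ᵀ * A * D i) * ((D i)ᵀ * A * D i)⁻¹) * ((D i)ᵀ * A * R (i + 1))) := by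
      simp [Matrix.mul_assoc]
    rw [this, hSmul i hi, Matrix.one_mul]
    abel
  -- injectivity of D i
  have hDinj : ∀ i ≤ k, Function.Injective (D i).mulVec := fun i hi =>
    cCG_aux_inj _ (hrank i hi)
  -- injectivity of R i
  have hRinj : ∀ i ≤ k, Function.Injective (R i).mulVec := by
    intro i hi
    cases i with
    | zero => rw [← hD0]; exact hDinj 0 hi
    | succ j =>
      have hj : j ≤ k := Nat.le_of_succ_le hi
      intro v w hvw
      have hvw' : R (j + 1) *ᵥ (v - w) = 0 := by
        rw [Matrix.mulVec_sub, hvw, sub_self]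
      suffices h : v - w = 0 by
        have := sub_eq_zero.mp h; exact this
      set u := (β j)ᵀ *ᵥ (v - w) with hu
      have hDv : D (j + 1) *ᵥ (v - w) = D j *ᵥ u := by
        rw [hDs j hj, Matrix.add_mulVec, hvw', zero_add, ← Matrix.mulVec_mulVec]
      set w0 := D (j + 1) *ᵥ (v - w) with hw0
      have hq : w0 ⬝ᵥ A *ᵥ w0 = 0 := by
        calc w0 ⬝ᵥ A *ᵥ w0
            = (D j *ᵥ u) ⬝ᵥ (A * D (j + 1)) *ᵥ (v - w) := by
              rw [← hDv, hw0, Matrix.mulVec_mulVec]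
          _ = u ⬝ᵥ ((D j)ᵀ * (A * D (j + 1))) *ᵥ (v - w) := by
              rw [hdp, Matrix.mulVec_mulVec]
          _ = 0 := by
              rw [← Matrix.mul_assoc, hconj1 j hj]
              simp
      have hw0z : w0 = 0 := by
        by_contra hne
        have := hA.dotProduct_mulVec_pos hne
        rw [star_trivial] at this
        exact absurd hq (ne_of_gt this)
      have : D (j + 1) *ᵥ (v - w) = D (j + 1) *ᵥ 0 := by
        rw [Matrix.mulVec_zero, ← hw0, hw0z]
      exact hDinj (j + 1) hi this
  -- α i is ±(R iᵀ R i) S i⁻¹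
  have hRD : ∀ i ≤ k, (R i)ᵀ * D i = (R i)ᵀ * R i := by
    intro i hi
    cases i with
    | zero => conv_lhs => rw [hD0]
    | succ j =>
      have hj : j ≤ k := Nat.le_of_succ_le hi
      rw [hDs j hj, Matrix.mul_add]
      have : (R (j + 1))ᵀ * (D j * (β j)ᵀ)
          = ((D j)ᵀ * R (j + 1))ᵀ * (β j)ᵀ := by
        simp [Matrix.transpose_mul, Matrix.mul_assoc]
      rw [this, horth1 j hj]
      simp
  have hα' : ∀ i ≤ k, α i = -((R i)ᵀ * R i * ((D i)ᵀ * A * D i)⁻¹) := by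
    intro i hi
    rw [hα i hi, hRD i hi]
  -- α i has a unit determinant
  have hαdet : ∀ i ≤ k, IsUnit (α i).det := by
    intro i hi
    rw [hα' i hi, Matrix.det_neg, Fintype.card_fin, Matrix.det_mul]
    have h1 : IsUnit ((R i)ᵀ * R i).det :=
      (cCG_aux_posdef _ (hRinj i hi)).det_pos.ne'.isUnit
    have h2 : IsUnit (((D i)ᵀ * A * D i)⁻¹).det := by
      refine IsUnit.of_mul_eq_one ((D i)ᵀ * A * D i).det ?_
      rw [← Matrix.det_mul, Matrix.nonsing_inv_mul _ (hinv i hi), Matrix.det_one]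
    exact (isUnit_one.neg.pow p).mul (h1.mul h2)
  -- cancellation by α i on the left
  have hcancel : ∀ i ≤ k, ∀ M : Matrix (Fin p) (Fin p) ℝ, α i * M = 0 → M = 0 := by
    intro i hi M hM
    have := congrArg (fun N => (α i)⁻¹ * N) hM
    simpa [← Matrix.mul_assoc, Matrix.nonsing_inv_mul _ (hαdet i hi)] using this
  -- main induction
  have key : ∀ m, m ≤ k →
      (∀ i ≤ m, (D i)ᵀ * R (m + 1) = 0) ∧ (∀ i ≤ m, (D i)ᵀ * A * D (m + 1) = 0) := by
    intro m
    induction m with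
    | zero =>
      intro hm
      constructor
      · intro i hi
        have : i = 0 := Nat.le_zero.mp hi
        subst this
        exact horth1 0 hm
      · intro i hi
        have : i = 0 := Nat.le_zero.mp hi
        subst this
        exact hconj1 0 hm
    | succ m ih =>
      intro hm
      have hm' : m ≤ k := Nat.le_of_succ_le hm
      obtain ⟨ihO, ihC⟩ := ih hm'
      have hOrth : ∀ i ≤ m + 1, (D i)ᵀ * R (m + 2) = 0 := by
        intro i hi
        rcases Nat.eq_or_lt_of_le hi with h | h
        · subst h
          exact horth1 (m + 1) hm
        · have hi' : i ≤ m := Nat.lt_succ_iff.mp h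
          rw [hRrec (m + 1) hm, Matrix.mul_add, ihO i hi']
          have : (D i)ᵀ * (A * D (m + 1) * (α (m + 1))ᵀ)
              = ((D i)ᵀ * A * D (m + 1)) * (α (m + 1))ᵀ := by
            simp [Matrix.mul_assoc]
          rw [this, ihC i hi', Matrix.zero_mul, add_zero]
      refine ⟨hOrth, ?_⟩
      intro i hi
      rcases Nat.eq_or_lt_of_le hi with h | h
      · subst h
        exact hconj1 (m + 1) hm
      · have hi' : i ≤ m := Nat.lt_succ_iff.mp h
        have hik : i ≤ k := le_trans hi' hm'
        -- residual-residual orthogonality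
        have hRorth : ∀ j ≤ m + 1, (R j)ᵀ * R (m + 2) = 0 := by
          intro j hj
          cases j with
          | zero => rw [← hD0]; exact hOrth 0 (Nat.zero_le _)
          | succ j' =>
            have hj' : j' ≤ k := by omega
            have hRj : R (j' + 1) = D (j' + 1) - D j' * (β j')ᵀ := by
              rw [hDs j' hj']; abel
            rw [hRj, Matrix.transpose_sub, Matrix.sub_mul, hOrth (j' + 1) hj]
            have : (D j' * (β j')ᵀ)ᵀ * R (m + 2)
                = β j' * ((D j')ᵀ * R (m + 2)) := by
              simp [Matrix.transpose_mul, Matrix.mul_assoc]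
            rw [this, hOrth j' (by omega), Matrix.mul_zero]
            simp
        have h1 : A * D i * (α i)ᵀ = R (i + 1) - R i := by
          rw [hRrec i hik]; abel
        have h2 : α i * (D i)ᵀ * A = (R (i + 1) - R i)ᵀ := by
          rw [← h1]
          simp [Matrix.transpose_mul, hAs, Matrix.mul_assoc]
        have hkey : α i * ((D i)ᵀ * A * R (m + 2)) = 0 := by
          calc α i * ((D i)ᵀ * A * R (m + 2))
              = (α i * (D i)ᵀ * A) * R (m + 2) := by simp [Matrix.mul_assoc]
            _ = (R (i + 1) - R i)ᵀ * R (m + 2) := by rw [h2]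
            _ = 0 := by
                rw [Matrix.transpose_sub, Matrix.sub_mul,
                  hRorth (i + 1) (by omega), hRorth i (by omega), sub_zero]
        have h3 : (D i)ᵀ * A * R (m + 2) = 0 := hcancel i hik _ hkey
        rw [hDs (m + 1) hm, Matrix.mul_add, h3]
        have : (D i)ᵀ * A * (D (m + 1) * (β (m + 1))ᵀ)
            = ((D i)ᵀ * A * D (m + 1)) * (β (m + 1))ᵀ := by
          simp [Matrix.mul_assoc]
        rw [this, ihC i hi', Matrix.zero_mul, add_zero]
  intro i hi
  exact (key k le_rfl).1 i hi
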